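/- Let q1 : χ → ℝ≥0 satisfy q1[0] = 0 and be additive (q1[∑_k X_k] = ∑_k q1[X_k]), and let q2 : χ² → ℝ satisfy q2[0, Y] = 0 for all Y and be additive in its first argument (q2[∑_k X_k, Y] = ∑_k q2[X_k, Y]). If a risk-sharing rule C has strongly aggregate (q1,q2)-based standardized contributions, then C is the (q1,q2)-based linear rule: for every pool X with ∑_k q2[X_k, S_X] ≠ 0, C_i[X] = q1[X_i] + (q2[X_i, S_X]/∑_k q2[X_k, S_X]) · (S_X − ∑_k q1[X_k]). -/

import Mathlib

open MeasureTheory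

/-- Let `q1` be normalized and additive and let `q2` vanish at `0` and be
additive in its first argument. If a risk-sharing rule `C` has strongly aggregate
`(q1,q2)`-based standardized contributions, then `C` is the `(q1,q2)`-based linear
rule. -/
theorem stmt_14
    {Ω : Type*} [MeasurableSpace Ω] (μ : Measure Ω) [IsProbabilityMeasure μ]
    {n : ℕ} (hn : 1 ≤ n)
    (χ : Set (Ω → ℝ))
    (hχnonneg : ∀ f ∈ χ, ∀ ω, (0:ℝ) ≤ f ω)
    (hχzero : (fun _ : Ω => (0:ℝ)) ∈ χ)
    (hχadd : ∀ f g : Ω → ℝ, f ∈ χ → g ∈ χ → (fun ω => f ω + g ω) ∈ χ)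
    (q1 : (Ω → ℝ) → ℝ) (hq1 : ∀ f ∈ χ, 0 ≤ q1 f)
    (hq1zero : q1 (fun _ => 0) = 0)
    (hq1add : ∀ X : Fin n → Ω → ℝ, (∀ i, X i ∈ χ) →
      q1 (fun ω => ∑ k, X k ω) = ∑ k, q1 (X k))
    (q2 : (Ω → ℝ) → (Ω → ℝ) → ℝ)
    (hq2zero : ∀ Y : Ω → ℝ, q2 (fun _ => 0) Y = 0)
    (hq2add : ∀ X : Fin n → Ω → ℝ, (∀ i, X i ∈ χ) → ∀ Y ∈ χ,
      q2 (fun ω => ∑ k, X k ω) Y = ∑ k, q2 (X k) Y)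
    (C : (Fin n → Ω → ℝ) → Fin n → Ω → ℝ)
    (hfull : ∀ X : Fin n → Ω → ℝ, (∀ i, X i ∈ χ) →
      (fun ω => ∑ i, C X i ω) =ᵐ[μ] fun ω => ∑ i, X i ω)
    (hstrong : ∃ h : ℝ → ℝ → ℝ → Fin n → ℝ,
      ∀ X : Fin n → Ω → ℝ, (∀ i, X i ∈ χ) →
        (∃ j, q2 (X j) (fun ω => ∑ k, X k ω) ≠ 0) → ∀ i,
          C X i =ᵐ[μ] fun ω =>
            q1 (X i) +
              q2 (X i) (fun ω' => ∑ k, X k ω') *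
                h (∑ k, X k ω) (q1 (fun ω' => ∑ k, X k ω'))
                  (q2 (fun ω' => ∑ k, X k ω') (fun ω' => ∑ k, X k ω')) i) :
    ∀ X : Fin n → Ω → ℝ, (∀ i, X i ∈ χ) →
      (∑ k, q2 (X k) (fun ω => ∑ l, X l ω)) ≠ 0 → ∀ i,
        C X i =ᵐ[μ] fun ω =>
          q1 (X i) +
            (q2 (X i) (fun ω' => ∑ k, X k ω') /
                ∑ k, q2 (X k) (fun ω' => ∑ l, X l ω')) *
              ((∑ k, X k ω) - ∑ k, q1 (X k)) := by
  obtain ⟨h, hh⟩ := hstrong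
  intro X hX hQ i
  set S : Ω → ℝ := fun ω => ∑ k, X k ω with hSdef
  have hSmem : S ∈ χ := by
    have key : ∀ s : Finset (Fin n), (fun ω => ∑ k ∈ s, X k ω) ∈ χ := by
      intro s
      induction s using Finset.induction with
      | empty => simpa using hχzero
      | insert _ _ hns ih =>
          simp only [Finset.sum_insert hns]
          exact hχadd _ _ (hX _) ih
    exact key Finset.univ
  have hQeq : q2 S S = ∑ k, q2 (X k) S := hq2add X hX S hSmem
  have hq1eq : q1 S = ∑ k, q1 (X k) := hq1add X hX
  have hQne : q2 S S ≠ 0 := by rw [hQeq]; exact hQ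
  -- degenerate pool with everything at position i
  set Y : Fin n → Ω → ℝ := fun j => if j = i then S else fun _ => 0 with hYdef
  have hYmem : ∀ j, Y j ∈ χ := by
    intro j
    by_cases hj : j = i <;> simp [hYdef, hj, hSmem, hχzero]
  have hYsum : (fun ω => ∑ k, Y k ω) = S := by
    funext ω
    simp [hYdef, apply_ite (fun f : Ω → ℝ => f ω)]
  have hYi : Y i = S := by simp [hYdef]
  have hjw : ∃ j, q2 (Y j) (fun ω => ∑ k, Y k ω) ≠ 0 := by
    refine ⟨i, ?_⟩
    rw [hYsum, hYi]
    exact hQne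
  have hCi := hh Y hYmem hjw i
  rw [hYsum, hYi] at hCi
  have hall : ∀ᵐ ω ∂μ, ∀ j, j ≠ i → C Y j ω = 0 := by
    rw [MeasureTheory.ae_all_iff]
    intro j
    by_cases hji : j = i
    · filter_upwards with ω hji'; exact absurd hji hji'
    · have hCj := hh Y hYmem hjw j
      rw [hYsum] at hCj
      filter_upwards [hCj] with ω hω _
      have hYj : Y j = fun _ => 0 := by simp [hYdef, hji]
      rw [hω, hYj, hq1zero, hq2zero]
      ring
  have hfullY := hfull Y hYmem
  have heq : ∀ᵐ ω ∂μ, q1 S + q2 S S * h (S ω) (q1 S) (q2 S S) i = S ω := by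
    filter_upwards [hfullY, hCi, hall] with ω h1 h2 h3
    have hsum : ∑ j, C Y j ω = C Y i ω := Fintype.sum_eq_single i h3
    have hrs : ∑ k, Y k ω = S ω := congrFun hYsum ω
    rw [hsum, h2, hrs] at h1
    exact h1
  have hXw : ∃ j, q2 (X j) (fun ω => ∑ k, X k ω) ≠ 0 := by
    by_contra hc
    push_neg at hc
    exact hQ (Finset.sum_eq_zero fun k _ => hc k)
  have hCXi := hh X hX hXw i
  refine hCXi.trans ?_
  filter_upwards [heq] with ω hω
  have hval : h (S ω) (q1 S) (q2 S S) i = (S ω - q1 S) / q2 S S := by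
    field_simp
    linarith
  show q1 (X i) + q2 (X i) S * h (S ω) (q1 S) (q2 S S) i =
    q1 (X i) + q2 (X i) S / (∑ k, q2 (X k) S) * (S ω - ∑ k, q1 (X k))
  rw [hval, ← hQeq, ← hq1eq]
  ring
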